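/- Let Φ be an n×n diagonal matrix with entries in {0,1}, let γ ∈ ℝ, and set U = X ⊗ (I_n − Φ) + Z ⊗ Φ and U_γ = ((exp(iγZ) ⊗ I_n) · U)². Then U_γ = I_{2} ⊗ I_n + (exp(2iγZ) − I_2) ⊗ Φ, where exp(iγZ) denotes the matrix exponential of iγZ (equal to diag(e^{iγ}, e^{-iγ})). -/

import Mathlib

open Matrix Kronecker

/-- For a diagonal 0-1 matrix `Φ`, with `U = X ⊗ (I − Φ) + Z ⊗ Φ`, the square
`U_γ = ((exp(iγZ) ⊗ I) · U)²` equals `I ⊗ I + (exp(2iγZ) − I) ⊗ Φ`. -/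
theorem stmt_3 {n : ℕ} (f : Fin n → ℂ) (hf : ∀ j, f j = 0 ∨ f j = 1)
    (Φ : Matrix (Fin n) (Fin n) ℂ) (hΦ : Φ = Matrix.diagonal f)
    (γ : ℝ)
    (X Z : Matrix (Fin 2) (Fin 2) ℂ)
    (hX : X = !![0, 1; 1, 0]) (hZ : Z = !![1, 0; 0, -1])
    (U : Matrix (Fin 2 × Fin n) (Fin 2 × Fin n) ℂ)
    (hU : U = X ⊗ₖ (1 - Φ) + Z ⊗ₖ Φ)
    (Uγ : Matrix (Fin 2 × Fin n) (Fin 2 × Fin n) ℂ)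
    (hUγ : Uγ = ((NormedSpace.exp ((Complex.I * γ) • Z) ⊗ₖ
        (1 : Matrix (Fin n) (Fin n) ℂ)) * U) ^ 2) :
    Uγ = (1 : Matrix (Fin 2) (Fin 2) ℂ) ⊗ₖ (1 : Matrix (Fin n) (Fin n) ℂ) +
      (NormedSpace.exp ((2 * Complex.I * γ) • Z) - 1) ⊗ₖ Φ := by
  have hZd : Z = Matrix.diagonal ![1, -1] := by
    rw [hZ]; ext i j; fin_cases i <;> fin_cases j <;> simp [Matrix.diagonal]
  have hexp : ∀ c : ℂ, NormedSpace.exp (c • Z)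
      = Matrix.diagonal ![Complex.exp c, Complex.exp (-c)] := by
    intro c
    rw [hZd, ← Matrix.diagonal_smul, Matrix.exp_diagonal, Pi.exp_def]
    ext i j
    fin_cases i <;> fin_cases j <;>
      simp [Matrix.diagonal, ← Complex.exp_eq_exp_ℂ, smul_eq_mul, mul_neg_one]
  have hE := hexp (Complex.I * γ)
  have hE2 := hexp (2 * Complex.I * γ)
  set a : ℂ := Complex.exp (Complex.I * γ) with ha
  set a' : ℂ := Complex.exp (-(Complex.I * γ)) with ha'
  set E : Matrix (Fin 2) (Fin 2) ℂ := Matrix.diagonal ![a, a'] with hEdef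
  -- Φ is idempotent
  have hΦΦ : Φ * Φ = Φ := by
    subst hΦ
    rw [Matrix.diagonal_mul_diagonal]
    have : (fun i => f i * f i) = f := by
      funext j; rcases hf j with h | h <;> simp [h]
    rw [this]
  have h1Φ : (1 - Φ) * (1 - Φ) = 1 - Φ := by
    simp [Matrix.mul_sub, Matrix.sub_mul, hΦΦ]
  have hcross1 : (1 - Φ) * Φ = 0 := by
    simp [Matrix.sub_mul, hΦΦ]
  have hcross2 : Φ * (1 - Φ) = 0 := by
    simp [Matrix.mul_sub, hΦΦ]
  -- 2×2 computations
  have haa : a * a = Complex.exp (2 * Complex.I * γ) := by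
    rw [ha, ← Complex.exp_add]; ring_nf
  have haa' : a' * a' = Complex.exp (-(2 * Complex.I * γ)) := by
    rw [ha', ← Complex.exp_add]; ring_nf
  have haa'' : a * a' = 1 := by
    rw [ha, ha', ← Complex.exp_add]; simp
  have haa''' : a' * a = 1 := by
    rw [mul_comm]; exact haa''
  have hXX : (E * X) * (E * X) = 1 := by
    rw [hX, hEdef]
    ext i j
    fin_cases i <;> fin_cases j <;>
      simp [Matrix.mul_apply, Fin.sum_univ_two, Matrix.one_apply, haa'', haa''']
  have hZZ : (E * Z) * (E * Z)
      = Matrix.diagonal ![Complex.exp (2 * Complex.I * γ),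
          Complex.exp (-(2 * Complex.I * γ))] := by
    rw [hZ, hEdef]
    ext i j
    fin_cases i <;> fin_cases j <;>
      simp [Matrix.mul_apply, Fin.sum_univ_two, haa, haa']
  rw [hUγ, hU, hE, hE2, pow_two]
  simp only [Matrix.mul_add, Matrix.add_mul, ← Matrix.mul_kronecker_mul,
    Matrix.one_mul, Matrix.mul_one]
  rw [hXX, hZZ, h1Φ, hΦΦ, hcross1, hcross2]
  have hsubl : ∀ (A B : Matrix (Fin 2) (Fin 2) ℂ) (P : Matrix (Fin n) (Fin n) ℂ),
      (A - B) ⊗ₖ P = A ⊗ₖ P - B ⊗ₖ P := by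
    intro A B P; ext ⟨i, k⟩ ⟨j, l⟩
    simp [Matrix.kroneckerMap_apply, sub_mul]
  have hsubr : ∀ (A : Matrix (Fin 2) (Fin 2) ℂ) (P Q : Matrix (Fin n) (Fin n) ℂ),
      A ⊗ₖ (P - Q) = A ⊗ₖ P - A ⊗ₖ Q := by
    intro A P Q; ext ⟨i, k⟩ ⟨j, l⟩
    simp [Matrix.kroneckerMap_apply, mul_sub]
  rw [Matrix.kronecker_zero, Matrix.kronecker_zero, hsubl, hsubr]
  abel
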